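/- arXiv:1912.09990 — 3 statements merged into one kernel-verified Lean document; each statement's English description precedes it below -/
import Mathlib

section
/- Let ν be a probability measure on ℝⁿ with finite second moments, let Q ∈ ℝ^{d×d} and R ∈ ℝ^{m×m} be symmetric positive definite, and let P ∈ ℝ^{d×d} be a symmetric positive definite solution of the Riccati equation P = Q + F(P) − H(P)ᵀ(R + G(P))⁻¹H(P). Then for every x₀ ∈ ℝ^d and every admissible policy (π_k)_{k∈ℕ}, the infinite-horizon expected cost satisfies Σ_{k=0}^∞ E[x_kᵀ Q x_k + u_kᵀ R u_k] ≥ x₀ᵀ P x₀, where the expectation is taken with respect to the infinite product measure ν^ℕ of the i.i.d. disturbance sequence. -/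
open MeasureTheory Matrix Filter
open scoped Kronecker

noncomputable section

/-- `A(w) = A₀ + Σᵢ w⁽ⁱ⁾ Aᵢ`. -/
def Amat {n d : ℕ} (A : Fin (n + 1) → Matrix (Fin d) (Fin d) ℝ) (w : Fin n → ℝ) :
    Matrix (Fin d) (Fin d) ℝ :=
  A 0 + ∑ i : Fin n, w i • A i.succ

/-- `B(w) = B₀ + Σᵢ w⁽ⁱ⁾ Bᵢ`. -/
def Bmat {n d m : ℕ} (B : Fin (n + 1) → Matrix (Fin d) (Fin m) ℝ) (w : Fin n → ℝ) :
    Matrix (Fin d) (Fin m) ℝ :=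
  B 0 + ∑ i : Fin n, w i • B i.succ

/-- `Ā₀`: the `((n+1)d) × d` vertical stacking of `A₀, A₁, …, Aₙ`. -/
def Abar {n d : ℕ} (A : Fin (n + 1) → Matrix (Fin d) (Fin d) ℝ) :
    Matrix (Fin (n + 1) × Fin d) (Fin d) ℝ :=
  Matrix.of fun p j => A p.1 p.2 j

/-- `B̄₀`: the `((n+1)d) × m` vertical stacking of `B₀, B₁, …, Bₙ`. -/
def Bbar {n d m : ℕ} (B : Fin (n + 1) → Matrix (Fin d) (Fin m) ℝ) :
    Matrix (Fin (n + 1) × Fin d) (Fin m) ℝ :=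
  Matrix.of fun p j => B p.1 p.2 j

/-- `Σ̃ = [[1, μᵀ], [μ, Σ + μμᵀ]]`. -/
def tildeSigma {n : ℕ} (μ : Fin n → ℝ) (S : Matrix (Fin n) (Fin n) ℝ) :
    Matrix (Fin (n + 1)) (Fin (n + 1)) ℝ :=
  Matrix.of fun i j =>
    Fin.cases (motive := fun _ => ℝ)
      (Fin.cases (motive := fun _ => ℝ) (1 : ℝ) (fun j' => μ j') j)
      (fun i' => Fin.cases (motive := fun _ => ℝ) (μ i')
        (fun j' => S i' j' + μ i' * μ j') j) i

/-- `F(P) = Ā₀ᵀ(Σ̃ ⊗ P)Ā₀`. -/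
def Fm {n d : ℕ} (A : Fin (n + 1) → Matrix (Fin d) (Fin d) ℝ)
    (St : Matrix (Fin (n + 1)) (Fin (n + 1)) ℝ) (P : Matrix (Fin d) (Fin d) ℝ) :
    Matrix (Fin d) (Fin d) ℝ :=
  (Abar A)ᵀ * (St ⊗ₖ P) * Abar A

/-- `G(P) = B̄₀ᵀ(Σ̃ ⊗ P)B̄₀`. -/
def Gm {n d m : ℕ} (B : Fin (n + 1) → Matrix (Fin d) (Fin m) ℝ)
    (St : Matrix (Fin (n + 1)) (Fin (n + 1)) ℝ) (P : Matrix (Fin d) (Fin d) ℝ) :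
    Matrix (Fin m) (Fin m) ℝ :=
  (Bbar B)ᵀ * (St ⊗ₖ P) * Bbar B

/-- `H(P) = B̄₀ᵀ(Σ̃ ⊗ P)Ā₀`. -/
def Hm {n d m : ℕ} (A : Fin (n + 1) → Matrix (Fin d) (Fin d) ℝ)
    (B : Fin (n + 1) → Matrix (Fin d) (Fin m) ℝ)
    (St : Matrix (Fin (n + 1)) (Fin (n + 1)) ℝ) (P : Matrix (Fin d) (Fin d) ℝ) :
    Matrix (Fin m) (Fin d) ℝ :=
  (Bbar B)ᵀ * (St ⊗ₖ P) * Abar A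

/-- Second-moment matrices of the autonomous system `x_{k+1} = M(w_k) x_k`. -/
def Sseq {n d : ℕ} (ν : Measure (Fin n → ℝ))
    (M : (Fin n → ℝ) → Matrix (Fin d) (Fin d) ℝ) (x₀ : Fin d → ℝ) :
    ℕ → Matrix (Fin d) (Fin d) ℝ
  | 0 => Matrix.vecMulVec x₀ x₀
  | k + 1 => Matrix.of fun i j => ∫ w, (M w * Sseq ν M x₀ k * (M w)ᵀ) i j ∂ν

/-- The controlled trajectory `x_{k+1} = A(w_k)x_k + B(w_k)u_k`, `u_k = π_k(w₀, …, w_{k−1})`,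
viewed as a function of the first `k` disturbances. -/
def traj {n d m : ℕ} (A : Fin (n + 1) → Matrix (Fin d) (Fin d) ℝ)
    (B : Fin (n + 1) → Matrix (Fin d) (Fin m) ℝ)
    (π : (k : ℕ) → (Fin k → (Fin n → ℝ)) → (Fin m → ℝ)) (x₀ : Fin d → ℝ) :
    (k : ℕ) → (Fin k → (Fin n → ℝ)) → (Fin d → ℝ)
  | 0, _ => x₀
  | k + 1, ws =>
      Amat A (ws (Fin.last k)) *ᵥ traj A B π x₀ k (fun i => ws i.castSucc) +
        Bmat B (ws (Fin.last k)) *ᵥ π k (fun i => ws i.castSucc)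

open Topology
open scoped ENNReal

section Helpers

variable {n d e mm : ℕ} {ι : Type*} {α : Type*} [MeasurableSpace α]

lemma sum_mulVec' (s : Finset ι) (M : ι → Matrix (Fin d) (Fin e) ℝ) (v : Fin e → ℝ) :
    (∑ i ∈ s, M i) *ᵥ v = ∑ i ∈ s, M i *ᵥ v := by
  ext a
  simp only [mulVec, dotProduct, Finset.sum_apply, Matrix.sum_apply, Finset.sum_mul]
  exact Finset.sum_comm

lemma sum_dotProduct' (s : Finset ι) (f : ι → Fin d → ℝ) (v : Fin d → ℝ) :
    (∑ i ∈ s, f i) ⬝ᵥ v = ∑ i ∈ s, f i ⬝ᵥ v := by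
  simp only [dotProduct, Finset.sum_apply, Finset.sum_mul]
  exact Finset.sum_comm

lemma dotProduct_sum' (s : Finset ι) (v : Fin d → ℝ) (f : ι → Fin d → ℝ) :
    v ⬝ᵥ (∑ i ∈ s, f i) = ∑ i ∈ s, v ⬝ᵥ f i := by
  simp only [dotProduct, Finset.sum_apply, Finset.mul_sum]
  exact Finset.sum_comm

lemma expand_mulVec (C : Fin (n + 1) → Matrix (Fin d) (Fin e) ℝ) (w : Fin n → ℝ)
    (v : Fin e → ℝ) :
    (C 0 + ∑ i : Fin n, w i • C i.succ) *ᵥ v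
      = ∑ i : Fin (n + 1), (Fin.cons (1 : ℝ) w : Fin (n + 1) → ℝ) i • (C i *ᵥ v) := by
  rw [Fin.sum_univ_succ]
  simp [add_mulVec, sum_mulVec', smul_mulVec]

lemma quad_double_sum (P : Matrix (Fin d) (Fin d) ℝ) (c : Fin (n + 1) → ℝ)
    (y : Fin (n + 1) → Fin d → ℝ) :
    (∑ i, c i • y i) ⬝ᵥ P *ᵥ (∑ j, c j • y j)
      = ∑ i, ∑ j, (c i * c j) * (y i ⬝ᵥ P *ᵥ y j) := by
  rw [sum_dotProduct']
  refine Finset.sum_congr rfl fun i _ => ?_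
  rw [smul_dotProduct, ← mulVecLin_apply, map_sum, dotProduct_sum', Finset.smul_sum]
  refine Finset.sum_congr rfl fun j _ => ?_
  rw [_root_.map_smul, dotProduct_smul, mulVecLin_apply]
  simp only [smul_eq_mul]
  ring

lemma kron_quad (St : Matrix (Fin (n + 1)) (Fin (n + 1)) ℝ) (P : Matrix (Fin d) (Fin d) ℝ)
    (y : Fin (n + 1) → Fin d → ℝ) :
    (fun p : Fin (n + 1) × Fin d => y p.1 p.2) ⬝ᵥ (St ⊗ₖ P) *ᵥ (fun p => y p.1 p.2)
      = ∑ i, ∑ j, St i j * (y i ⬝ᵥ P *ᵥ y j) := by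
  simp only [mulVec, dotProduct, kroneckerMap_apply, Fintype.sum_prod_type, Finset.mul_sum,
    Finset.sum_mul]
  refine Finset.sum_congr rfl fun i _ => ?_
  rw [Finset.sum_comm]
  refine Finset.sum_congr rfl fun j _ => ?_
  refine Finset.sum_congr rfl fun a _ => ?_
  exact Finset.sum_congr rfl fun b _ => by ring

lemma dot_mulVec_comm {A B : Type*} [Fintype A] [Fintype B] (x : A → ℝ) (C : Matrix A B ℝ) (y : B → ℝ) :
    x ⬝ᵥ C *ᵥ y = y ⬝ᵥ Cᵀ *ᵥ x := by
  rw [mulVec_transpose, dotProduct_mulVec, dotProduct_comm]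

lemma mulVec_dotProduct' {A B : Type*} [Fintype A] [Fintype B] (M : Matrix A B ℝ) (z : B → ℝ)
    (t : A → ℝ) : (M *ᵥ z) ⬝ᵥ t = z ⬝ᵥ Mᵀ *ᵥ t := by
  rw [dotProduct_comm, dot_mulVec_comm]

lemma quad3 {A B C E : Type*} [Fintype A] [Fintype B] [Fintype C] [Fintype E]
    (M : Matrix A B ℝ) (K : Matrix A C ℝ)
    (N : Matrix C E ℝ) (x : B → ℝ) (y : E → ℝ) :
    (M *ᵥ x) ⬝ᵥ K *ᵥ (N *ᵥ y) = x ⬝ᵥ (Mᵀ * K * N) *ᵥ y := by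
  rw [dotProduct_mulVec x, ← vecMul_vecMul, ← vecMul_vecMul, vecMul_transpose,
    ← dotProduct_mulVec, ← dotProduct_mulVec, mulVec_mulVec]

lemma split_quad {A B C : Type*} [Fintype A] [Fintype B] [Fintype C]
    (K : Matrix A A ℝ) (hK : Kᵀ = K)
    (M : Matrix A B ℝ) (N : Matrix A C ℝ)
    (x : B → ℝ) (u : C → ℝ) :
    (M *ᵥ x + N *ᵥ u) ⬝ᵥ K *ᵥ (M *ᵥ x + N *ᵥ u)
      = x ⬝ᵥ (Mᵀ * K * M) *ᵥ x + 2 * (u ⬝ᵥ (Nᵀ * K * M) *ᵥ x) + u ⬝ᵥ (Nᵀ * K * N) *ᵥ u := by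
  have cross : (M *ᵥ x) ⬝ᵥ K *ᵥ (N *ᵥ u) = u ⬝ᵥ (Nᵀ * K * M) *ᵥ x := by
    rw [quad3, dot_mulVec_comm, transpose_mul, transpose_mul, transpose_transpose, hK,
      Matrix.mul_assoc]
  have c2 : (N *ᵥ u) ⬝ᵥ K *ᵥ (M *ᵥ x) = u ⬝ᵥ (Nᵀ * K * M) *ᵥ x := quad3 N K M u x
  rw [mulVec_add, dotProduct_add, add_dotProduct, add_dotProduct, quad3 M K M, quad3 N K N,
    cross, c2]
  ring

lemma lower_bound_aux {dd mm : ℕ} (P Q F : Matrix (Fin dd) (Fin dd) ℝ)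
    (R G : Matrix (Fin mm) (Fin mm) ℝ) (H : Matrix (Fin mm) (Fin dd) ℝ)
    (hW : (R + G).PosDef)
    (hRic : P = Q + F - Hᵀ * (R + G)⁻¹ * H)
    (x : Fin dd → ℝ) (u : Fin mm → ℝ) :
    x ⬝ᵥ P *ᵥ x ≤ x ⬝ᵥ Q *ᵥ x + u ⬝ᵥ R *ᵥ u +
      (x ⬝ᵥ F *ᵥ x + 2 * (u ⬝ᵥ H *ᵥ x) + u ⬝ᵥ G *ᵥ u) := by
  set W := R + G with hWdef
  have hWsym : Wᵀ = W := by
    rw [← Matrix.conjTranspose_eq_transpose_of_trivial]; exact hW.isHermitian.eq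
  have hWinv_sym : (W⁻¹)ᵀ = W⁻¹ := by rw [transpose_nonsing_inv, hWsym]
  have hdet : IsUnit W.det := hW.det_pos.ne'.isUnit
  set z : Fin mm → ℝ := H *ᵥ x with hz
  set v : Fin mm → ℝ := u + W⁻¹ *ᵥ z with hv
  have hvW : 0 ≤ v ⬝ᵥ W *ᵥ v := by simpa only [star_trivial] using hW.posSemidef.dotProduct_mulVec_nonneg v
  have h1 : W *ᵥ (W⁻¹ *ᵥ z) = z := by
    rw [mulVec_mulVec, Matrix.mul_nonsing_inv _ hdet, one_mulVec]
  have h2 : (W⁻¹ *ᵥ z) ⬝ᵥ (W *ᵥ u) = u ⬝ᵥ H *ᵥ x := by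
    rw [mulVec_dotProduct', hWinv_sym, mulVec_mulVec, Matrix.nonsing_inv_mul _ hdet,
      one_mulVec, dotProduct_comm, hz]
  have h4 : (W⁻¹ *ᵥ z) ⬝ᵥ (W *ᵥ (W⁻¹ *ᵥ z)) = x ⬝ᵥ (Hᵀ * W⁻¹ * H) *ᵥ x := by
    rw [h1, mulVec_dotProduct', hWinv_sym, hz, quad3]
  have hexp : v ⬝ᵥ W *ᵥ v
      = u ⬝ᵥ W *ᵥ u + 2 * (u ⬝ᵥ H *ᵥ x) + x ⬝ᵥ (Hᵀ * W⁻¹ * H) *ᵥ x := by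
    rw [hv, mulVec_add, dotProduct_add, add_dotProduct, add_dotProduct, h4, h2, h1, hz]
    ring
  have hPx : x ⬝ᵥ P *ᵥ x = x ⬝ᵥ Q *ᵥ x + x ⬝ᵥ F *ᵥ x - x ⬝ᵥ (Hᵀ * W⁻¹ * H) *ᵥ x := by
    rw [hRic]
    simp [sub_mulVec, add_mulVec, dotProduct_add, dotProduct_sub]
  have hWu : u ⬝ᵥ W *ᵥ u = u ⬝ᵥ R *ᵥ u + u ⬝ᵥ G *ᵥ u := by
    rw [hWdef, add_mulVec, dotProduct_add]
  rw [hexp, hWu] at hvW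
  linarith

lemma measurable_cmat_mulVec (C : Fin (n + 1) → Matrix (Fin d) (Fin e) ℝ)
    {w : α → Fin n → ℝ} (hw : Measurable w) {v : α → Fin e → ℝ} (hv : Measurable v) :
    Measurable fun a => (C 0 + ∑ i : Fin n, w a i • C i.succ) *ᵥ v a := by
  refine measurable_pi_lambda _ fun i => ?_
  simp only [mulVec, dotProduct, Matrix.add_apply, Matrix.sum_apply, Matrix.smul_apply,
    smul_eq_mul]
  refine Finset.measurable_sum _ fun j _ => Measurable.mul ?_ ?_
  · exact (measurable_const.add (Finset.measurable_sum _ fun t _ =>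
      ((measurable_pi_apply t).comp hw).mul measurable_const))
  · exact (measurable_pi_apply j).comp hv

lemma measurable_quadform (M : Matrix (Fin d) (Fin d) ℝ)
    {f g : α → Fin d → ℝ} (hf : Measurable f) (hg : Measurable g) :
    Measurable fun a => f a ⬝ᵥ M *ᵥ g a := by
  simp only [mulVec, dotProduct]
  refine Finset.measurable_sum _ fun i _ => Measurable.mul ((measurable_pi_apply i).comp hf) ?_
  exact Finset.measurable_sum _ fun j _ => measurable_const.mul ((measurable_pi_apply j).comp hg)

lemma exists_ratio {dd : ℕ} {P Q : Matrix (Fin dd) (Fin dd) ℝ} (hP : P.PosSemidef)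
    (hQ : Q.PosDef) : ∃ r : ℝ, 0 ≤ r ∧ ∀ y, y ⬝ᵥ P *ᵥ y ≤ r * (y ⬝ᵥ Q *ᵥ y) := by
  have hscale : ∀ (M : Matrix (Fin dd) (Fin dd) ℝ) (s : ℝ) (z : Fin dd → ℝ),
      (s • z) ⬝ᵥ M *ᵥ (s • z) = s ^ 2 * (z ⬝ᵥ M *ᵥ z) := by
    intro M s z
    rw [smul_dotProduct, mulVec_smul, dotProduct_smul]
    simp only [smul_eq_mul]; ring
  rcases Nat.eq_zero_or_pos dd with h0 | hpos
  · subst h0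
    exact ⟨1, zero_le_one, fun y => by simp [dotProduct]⟩
  · have hcont : ∀ M : Matrix (Fin dd) (Fin dd) ℝ,
        Continuous fun y : Fin dd → ℝ => y ⬝ᵥ M *ᵥ y := by
      intro M
      simp only [dotProduct, mulVec]
      exact continuous_finset_sum _ fun i _ => (continuous_apply i).mul
        (continuous_finset_sum _ fun j _ => continuous_const.mul (continuous_apply j))
    haveI : Nontrivial (Fin dd → ℝ) :=
      ⟨⟨0, fun _ => 1, fun h => by simpa using congrFun h ⟨0, hpos⟩⟩⟩
    have hcomp : IsCompact (Metric.sphere (0 : Fin dd → ℝ) 1) := isCompact_sphere 0 1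
    have hnon : (Metric.sphere (0 : Fin dd → ℝ) 1).Nonempty :=
      NormedSpace.sphere_nonempty.mpr zero_le_one
    obtain ⟨yq, hyqS, hyqmin⟩ := hcomp.exists_isMinOn hnon (hcont Q).continuousOn
    obtain ⟨yp, hypS, hypmax⟩ := hcomp.exists_isMaxOn hnon (hcont P).continuousOn
    have hyq0 : yq ≠ 0 := by
      intro h
      rw [mem_sphere_zero_iff_norm, h, norm_zero] at hyqS
      norm_num at hyqS
    have hε : 0 < yq ⬝ᵥ Q *ᵥ yq := by
      have := hQ.dotProduct_mulVec_pos hyq0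
      rwa [star_trivial] at this
    have hM0 : 0 ≤ yp ⬝ᵥ P *ᵥ yp := by
      have := hP.dotProduct_mulVec_nonneg yp
      rwa [star_trivial] at this
    set ε := yq ⬝ᵥ Q *ᵥ yq
    set Mx := yp ⬝ᵥ P *ᵥ yp
    refine ⟨Mx / ε, div_nonneg hM0 hε.le, fun y => ?_⟩
    by_cases hy : y = 0
    · simp [hy]
    · have ht : ‖y‖ ≠ 0 := norm_ne_zero_iff.mpr hy
      set t : ℝ := ‖y‖ with htdef
      set z : Fin dd → ℝ := t⁻¹ • y with hzdef
      have hzS : z ∈ Metric.sphere (0 : Fin dd → ℝ) 1 := by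
        rw [mem_sphere_zero_iff_norm, hzdef, norm_smul, norm_inv, norm_norm, ← htdef,
          inv_mul_cancel₀ ht]
      have hyz : y = t • z := by rw [hzdef, smul_inv_smul₀ ht]
      have h1 : ε ≤ z ⬝ᵥ Q *ᵥ z := hyqmin hzS
      have h2 : z ⬝ᵥ P *ᵥ z ≤ Mx := hypmax hzS
      have hts : (0:ℝ) ≤ t ^ 2 := sq_nonneg t
      have hPy : y ⬝ᵥ P *ᵥ y = t ^ 2 * (z ⬝ᵥ P *ᵥ z) := by
        conv_lhs => rw [hyz]
        exact hscale P t z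
      have hQy : y ⬝ᵥ Q *ᵥ y = t ^ 2 * (z ⬝ᵥ Q *ᵥ z) := by
        conv_lhs => rw [hyz]
        exact hscale Q t z
      rw [hPy, hQy]
      calc t ^ 2 * (z ⬝ᵥ P *ᵥ z) ≤ t ^ 2 * Mx := by
            exact mul_le_mul_of_nonneg_left h2 hts
        _ = Mx / ε * (t ^ 2 * ε) := by field_simp
        _ ≤ Mx / ε * (t ^ 2 * (z ⬝ᵥ Q *ᵥ z)) := by
            refine mul_le_mul_of_nonneg_left ?_ (div_nonneg hM0 hε.le)
            exact mul_le_mul_of_nonneg_left h1 hts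

end Helpers

lemma quad_nonneg {dd : ℕ} {M : Matrix (Fin dd) (Fin dd) ℝ} (h : M.PosSemidef)
    (y : Fin dd → ℝ) : 0 ≤ y ⬝ᵥ M *ᵥ y := by
  have := h.dotProduct_mulVec_nonneg y
  rwa [star_trivial] at this

section Moments

variable {n d m : ℕ} {ν : Measure (Fin n → ℝ)} [IsProbabilityMeasure ν]
    (hint1 : ∀ i, Integrable (fun w : Fin n → ℝ => w i) ν)
    (hint2 : ∀ i j, Integrable (fun w : Fin n → ℝ => w i * w j) ν)
    {μ : Fin n → ℝ} (hμ : ∀ i, μ i = ∫ w, w i ∂ν)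
    {Sg : Matrix (Fin n) (Fin n) ℝ}
    (hSg : ∀ i j, Sg i j = ∫ w, (w i - μ i) * (w j - μ j) ∂ν)

set_option linter.unusedSectionVars false

include hint1 hint2 hμ hSg

lemma integrable_cc (i j : Fin (n + 1)) :
    Integrable (fun w : Fin n → ℝ => (Fin.cons (1 : ℝ) w : Fin (n + 1) → ℝ) i *
      (Fin.cons (1 : ℝ) w : Fin (n + 1) → ℝ) j) ν := by
  induction i using Fin.cases with
  | zero =>
    induction j using Fin.cases with
    | zero => simpa using integrable_const (1 : ℝ)
    | succ j => simpa using hint1 j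
  | succ i =>
    induction j using Fin.cases with
    | zero => simpa using hint1 i
    | succ j => simpa using hint2 i j

lemma integral_wiwj (i j : Fin n) : ∫ w, w i * w j ∂ν = Sg i j + μ i * μ j := by
  have hexpand : (fun w : Fin n → ℝ => (w i - μ i) * (w j - μ j))
      = fun w => w i * w j - (μ i * w j + μ j * w i - μ i * μ j) := by
    funext w; ring
  have hg : Integrable (fun w : Fin n → ℝ => μ i * w j + μ j * w i - μ i * μ j) ν :=
    (((hint1 j).const_mul (μ i)).add ((hint1 i).const_mul (μ j))).sub (integrable_const _)
  have h1 : Sg i j = ∫ w, w i * w j ∂ν - ∫ w, (μ i * w j + μ j * w i - μ i * μ j) ∂ν := by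
    rw [hSg i j, hexpand, integral_sub (hint2 i j) hg]
  have ha : Integrable (fun w : Fin n → ℝ => μ i * w j + μ j * w i) ν :=
    ((hint1 j).const_mul (μ i)).add ((hint1 i).const_mul (μ j))
  have h2 : ∫ w, (μ i * w j + μ j * w i - μ i * μ j) ∂ν = μ i * μ j := by
    rw [integral_sub ha (integrable_const _),
      integral_add ((hint1 j).const_mul (μ i)) ((hint1 i).const_mul (μ j)),
      integral_const_mul, integral_const_mul, integral_const, ← hμ j, ← hμ i]
    simp; ring
  rw [h1, h2] at *
  ring

lemma integral_cc (i j : Fin (n + 1)) :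
    ∫ w, (Fin.cons (1 : ℝ) w : Fin (n + 1) → ℝ) i *
      (Fin.cons (1 : ℝ) w : Fin (n + 1) → ℝ) j ∂ν = tildeSigma μ Sg i j := by
  induction i using Fin.cases with
  | zero =>
    induction j using Fin.cases with
    | zero => simp [tildeSigma]
    | succ j => simp [tildeSigma, hμ j]
  | succ i =>
    induction j using Fin.cases with
    | zero => simp [tildeSigma, hμ i]
    | succ j =>
      simp only [Fin.cons_succ, tildeSigma, Matrix.of_apply, Fin.cases_succ]
      exact integral_wiwj hint1 hint2 hμ hSg i j

lemma integrable_qform (P : Matrix (Fin d) (Fin d) ℝ) (y : Fin (n + 1) → Fin d → ℝ) :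
    Integrable (fun w : Fin n → ℝ =>
      (∑ i, (Fin.cons (1 : ℝ) w : Fin (n + 1) → ℝ) i • y i) ⬝ᵥ P *ᵥ
        (∑ j, (Fin.cons (1 : ℝ) w : Fin (n + 1) → ℝ) j • y j)) ν := by
  simp only [quad_double_sum]
  exact integrable_finset_sum _ fun i _ => integrable_finset_sum _ fun j _ =>
    (integrable_cc hint1 hint2 hμ hSg i j).mul_const _

lemma integral_qform (P : Matrix (Fin d) (Fin d) ℝ) (y : Fin (n + 1) → Fin d → ℝ) :
    ∫ w, (∑ i, (Fin.cons (1 : ℝ) w : Fin (n + 1) → ℝ) i • y i) ⬝ᵥ P *ᵥ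
        (∑ j, (Fin.cons (1 : ℝ) w : Fin (n + 1) → ℝ) j • y j) ∂ν
      = ∑ i, ∑ j, tildeSigma μ Sg i j * (y i ⬝ᵥ P *ᵥ y j) := by
  simp only [quad_double_sum]
  rw [integral_finset_sum _ (fun i _ => integrable_finset_sum _ fun j _ =>
    (integrable_cc hint1 hint2 hμ hSg i j).mul_const _)]
  refine Finset.sum_congr rfl fun i _ => ?_
  rw [integral_finset_sum _ (fun j _ => (integrable_cc hint1 hint2 hμ hSg i j).mul_const _)]
  refine Finset.sum_congr rfl fun j _ => ?_
  rw [integral_mul_const, integral_cc hint1 hint2 hμ hSg i j]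

lemma kron_psd {P : Matrix (Fin d) (Fin d) ℝ} (hP : P.PosSemidef)
    (z : Fin (n + 1) × Fin d → ℝ) :
    0 ≤ z ⬝ᵥ (tildeSigma μ Sg ⊗ₖ P) *ᵥ z := by
  have hk : z ⬝ᵥ (tildeSigma μ Sg ⊗ₖ P) *ᵥ z
      = ∑ i, ∑ j, tildeSigma μ Sg i j *
        ((fun a => z (i, a)) ⬝ᵥ P *ᵥ (fun a => z (j, a))) := by
    simpa using kron_quad (tildeSigma μ Sg) P (fun i a => z (i, a))
  rw [hk, ← integral_qform hint1 hint2 hμ hSg]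
  exact integral_nonneg fun w => quad_nonneg hP _

end Moments

lemma tildeSigma_symm {n : ℕ} {ν : Measure (Fin n → ℝ)}
    {μ : Fin n → ℝ} {Sg : Matrix (Fin n) (Fin n) ℝ}
    (hSg : ∀ i j, Sg i j = ∫ w, (w i - μ i) * (w j - μ j) ∂ν) :
    (tildeSigma μ Sg)ᵀ = tildeSigma μ Sg := by
  have hs : ∀ i j, Sg i j = Sg j i := by
    intro i j
    rw [hSg i j, hSg j i]
    exact integral_congr_ae (Filter.Eventually.of_forall fun w => by ring)
  ext i j
  rw [transpose_apply]
  induction i using Fin.cases with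
  | zero =>
    induction j using Fin.cases with
    | zero => rfl
    | succ j => simp [tildeSigma]
  | succ i =>
    induction j using Fin.cases with
    | zero => simp [tildeSigma]
    | succ j => simp [tildeSigma, hs i j]; ring

lemma kron_symm {n d : ℕ} {μ : Fin n → ℝ} {Sg : Matrix (Fin n) (Fin n) ℝ}
    (hSt : (tildeSigma μ Sg)ᵀ = tildeSigma μ Sg)
    {P : Matrix (Fin d) (Fin d) ℝ} (hPsym : Pᵀ = P) :
    (tildeSigma μ Sg ⊗ₖ P)ᵀ = tildeSigma μ Sg ⊗ₖ P := by
  rw [← kroneckerMap_transpose, hSt, hPsym]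

section StepLemmas

variable {n d m : ℕ} {ν : Measure (Fin n → ℝ)} [IsProbabilityMeasure ν]
    (hint1 : ∀ i, Integrable (fun w : Fin n → ℝ => w i) ν)
    (hint2 : ∀ i j, Integrable (fun w : Fin n → ℝ => w i * w j) ν)
    {μ : Fin n → ℝ} (hμ : ∀ i, μ i = ∫ w, w i ∂ν)
    {Sg : Matrix (Fin n) (Fin n) ℝ}
    (hSg : ∀ i j, Sg i j = ∫ w, (w i - μ i) * (w j - μ j) ∂ν)

set_option linter.unusedSectionVars false

include hint1 hint2 hμ hSg

lemma Gm_psd {P : Matrix (Fin d) (Fin d) ℝ} (hPsd : P.PosSemidef) (hPsym : Pᵀ = P)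
    (B : Fin (n + 1) → Matrix (Fin d) (Fin m) ℝ) :
    (Gm B (tildeSigma μ Sg) P).PosSemidef := by
  refine PosSemidef.of_dotProduct_mulVec_nonneg ?_ ?_
  · show (Gm B (tildeSigma μ Sg) P)ᴴ = _
    rw [conjTranspose_eq_transpose_of_trivial]
    unfold Gm
    rw [transpose_mul, transpose_mul, transpose_transpose,
      kron_symm (tildeSigma_symm hSg) hPsym, ← Matrix.mul_assoc]
  · intro u
    rw [star_trivial]
    unfold Gm
    rw [← quad3]
    exact kron_psd hint1 hint2 hμ hSg hPsd _

lemma step_expect (A : Fin (n + 1) → Matrix (Fin d) (Fin d) ℝ)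
    (B : Fin (n + 1) → Matrix (Fin d) (Fin m) ℝ)
    (P : Matrix (Fin d) (Fin d) ℝ) (hPsym : Pᵀ = P) (x : Fin d → ℝ) (u : Fin m → ℝ) :
    Integrable (fun w => (Amat A w *ᵥ x + Bmat B w *ᵥ u) ⬝ᵥ P *ᵥ
      (Amat A w *ᵥ x + Bmat B w *ᵥ u)) ν ∧
    ∫ w, (Amat A w *ᵥ x + Bmat B w *ᵥ u) ⬝ᵥ P *ᵥ (Amat A w *ᵥ x + Bmat B w *ᵥ u) ∂ν
      = x ⬝ᵥ Fm A (tildeSigma μ Sg) P *ᵥ x + 2 * (u ⬝ᵥ Hm A B (tildeSigma μ Sg) P *ᵥ x)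
        + u ⬝ᵥ Gm B (tildeSigma μ Sg) P *ᵥ u := by
  set y : Fin (n + 1) → Fin d → ℝ := fun i => A i *ᵥ x + B i *ᵥ u with hy
  have hx' : ∀ w : Fin n → ℝ, Amat A w *ᵥ x + Bmat B w *ᵥ u
      = ∑ i, (Fin.cons (1 : ℝ) w : Fin (n + 1) → ℝ) i • y i := by
    intro w
    simp only [Amat, Bmat]
    rw [expand_mulVec, expand_mulVec, ← Finset.sum_add_distrib]
    exact Finset.sum_congr rfl fun i _ => (smul_add _ _ _).symm
  have hzz : (fun p : Fin (n + 1) × Fin d => y p.1 p.2) = (Abar A *ᵥ x + Bbar B *ᵥ u) := by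
    funext p
    simp [hy, Abar, Bbar, mulVec, dotProduct, Matrix.of_apply]
  constructor
  · simp only [hx']
    exact integrable_qform hint1 hint2 hμ hSg P y
  · simp only [hx']
    rw [integral_qform hint1 hint2 hμ hSg P y, ← kron_quad, hzz,
      split_quad _ (kron_symm (tildeSigma_symm hSg) hPsym)]
    rfl

end StepLemmas

lemma traj_measurable {n d m : ℕ} (A : Fin (n + 1) → Matrix (Fin d) (Fin d) ℝ)
    (B : Fin (n + 1) → Matrix (Fin d) (Fin m) ℝ)
    (π : (k : ℕ) → (Fin k → (Fin n → ℝ)) → (Fin m → ℝ)) (hπ : ∀ k, Measurable (π k))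
    (x₀ : Fin d → ℝ) : ∀ k, Measurable (traj A B π x₀ k) := by
  intro k
  induction k with
  | zero => exact measurable_const
  | succ k ih =>
    have h1 : Measurable fun ws : Fin (k + 1) → (Fin n → ℝ) => ws (Fin.last k) :=
      measurable_pi_apply _
    have h2 : Measurable fun ws : Fin (k + 1) → (Fin n → ℝ) => (fun i : Fin k => ws i.castSucc) :=
      measurable_pi_lambda _ fun i => measurable_pi_apply _
    exact (measurable_cmat_mulVec A h1 (ih.comp h2)).add
      (measurable_cmat_mulVec B h1 ((hπ k).comp h2))

/-- If `P ≻ 0` solves the Riccati equation, then for every initial state and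
every admissible (measurable, causal) policy, the total expected cost of the controlled
trajectory is at least `x₀ᵀPx₀`.  Since `xₖ` and `uₖ` depend only on `w₀, …, w_{k−1}`, the
expectation of the `k`-th stage cost is taken over the product measure `ν^k`, and the total
cost is the (possibly infinite) sum in `ℝ≥0∞` of the stage costs. -/
theorem stmt14 {n d m : ℕ}
    (A : Fin (n + 1) → Matrix (Fin d) (Fin d) ℝ)
    (B : Fin (n + 1) → Matrix (Fin d) (Fin m) ℝ)
    (ν : Measure (Fin n → ℝ)) [IsProbabilityMeasure ν]
    (hint1 : ∀ i, Integrable (fun w : Fin n → ℝ => w i) ν)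
    (hint2 : ∀ i j, Integrable (fun w : Fin n → ℝ => w i * w j) ν)
    (μ : Fin n → ℝ) (hμ : ∀ i, μ i = ∫ w, w i ∂ν)
    (Sg : Matrix (Fin n) (Fin n) ℝ)
    (hSg : ∀ i j, Sg i j = ∫ w, (w i - μ i) * (w j - μ j) ∂ν)
    (Q : Matrix (Fin d) (Fin d) ℝ) (hQ : Q.PosDef)
    (R : Matrix (Fin m) (Fin m) ℝ) (hR : R.PosDef)
    (P : Matrix (Fin d) (Fin d) ℝ) (hP : P.PosDef)
    (hRic : P = Q + Fm A (tildeSigma μ Sg) P -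
      (Hm A B (tildeSigma μ Sg) P)ᵀ * (R + Gm B (tildeSigma μ Sg) P)⁻¹ *
        Hm A B (tildeSigma μ Sg) P)
    (x₀ : Fin d → ℝ)
    (π : (k : ℕ) → (Fin k → (Fin n → ℝ)) → (Fin m → ℝ))
    (hπ : ∀ k, Measurable (π k)) :
    ENNReal.ofReal (x₀ ⬝ᵥ P *ᵥ x₀) ≤
      ∑' k : ℕ, ∫⁻ ws, ENNReal.ofReal
          (traj A B π x₀ k ws ⬝ᵥ Q *ᵥ traj A B π x₀ k ws +
            π k ws ⬝ᵥ R *ᵥ π k ws)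
        ∂(Measure.pi fun _ : Fin k => ν) := by
  classical
  have hPsym : Pᵀ = P := by
    rw [← Matrix.conjTranspose_eq_transpose_of_trivial]; exact hP.isHermitian.eq
  have hW : (R + Gm B (tildeSigma μ Sg) P).PosDef :=
    hR.add_posSemidef (Gm_psd hint1 hint2 hμ hSg hP.posSemidef hPsym B)
  obtain ⟨r, hr0, hrle⟩ := exists_ratio hP.posSemidef hQ
  have hXm : ∀ k, Measurable (traj A B π x₀ k) := traj_measurable A B π hπ x₀
  set cost : ℕ → ℝ≥0∞ := fun k => ∫⁻ ws, ENNReal.ofReal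
      (traj A B π x₀ k ws ⬝ᵥ Q *ᵥ traj A B π x₀ k ws + π k ws ⬝ᵥ R *ᵥ π k ws)
    ∂(Measure.pi fun _ : Fin k => ν) with hcost
  set val : ℕ → ℝ≥0∞ := fun k => ∫⁻ ws, ENNReal.ofReal
      (traj A B π x₀ k ws ⬝ᵥ P *ᵥ traj A B π x₀ k ws)
    ∂(Measure.pi fun _ : Fin k => ν) with hval
  have hcost_meas : ∀ k, Measurable (fun ws : Fin k → (Fin n → ℝ) => ENNReal.ofReal
      (traj A B π x₀ k ws ⬝ᵥ Q *ᵥ traj A B π x₀ k ws + π k ws ⬝ᵥ R *ᵥ π k ws)) := fun k =>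
    ENNReal.measurable_ofReal.comp ((measurable_quadform Q (hXm k) (hXm k)).add
      (measurable_quadform R (hπ k) (hπ k)))
  -- the one-step inequality
  have hstep : ∀ k, val k ≤ cost k + val (k + 1) := by
    intro k
    set g : (Fin n → ℝ) × (Fin k → Fin n → ℝ) → ℝ≥0∞ := fun p =>
      ENNReal.ofReal ((Amat A p.1 *ᵥ traj A B π x₀ k p.2 + Bmat B p.1 *ᵥ π k p.2) ⬝ᵥ P *ᵥ
        (Amat A p.1 *ᵥ traj A B π x₀ k p.2 + Bmat B p.1 *ᵥ π k p.2)) with hg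
    have hgm : Measurable g := by
      refine ENNReal.measurable_ofReal.comp (measurable_quadform P ?_ ?_) <;>
        exact (measurable_cmat_mulVec A measurable_fst ((hXm k).comp measurable_snd)).add
          (measurable_cmat_mulVec B measurable_fst ((hπ k).comp measurable_snd))
    have hval1 : val (k + 1)
        = ∫⁻ ws, ∫⁻ w, g (w, ws) ∂ν ∂(Measure.pi fun _ : Fin k => ν) := by
      have hmp := measurePreserving_piFinSuccAbove (fun _ : Fin (k + 1) => ν) (Fin.last k)
      have h1 : val (k + 1) = ∫⁻ p, g p ∂(ν.prod (Measure.pi fun _ : Fin k => ν)) := by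
        rw [hval, ← hmp.lintegral_comp hgm]
        refine lintegral_congr fun ws => ?_
        have harg : (fun i : Fin k => ws ((Fin.last k).succAbove i))
            = fun i : Fin k => ws i.castSucc := by
          funext i; rw [Fin.succAbove_last]
        show ENNReal.ofReal _ = g (ws (Fin.last k), fun i => ws ((Fin.last k).succAbove i))
        rw [hg]
        simp only [traj, harg]
      rw [h1, lintegral_prod _ hgm.aemeasurable]
      exact lintegral_lintegral_swap hgm.aemeasurable
    have key : ∀ ws : Fin k → (Fin n → ℝ),
        ENNReal.ofReal (traj A B π x₀ k ws ⬝ᵥ P *ᵥ traj A B π x₀ k ws)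
          ≤ ENNReal.ofReal (traj A B π x₀ k ws ⬝ᵥ Q *ᵥ traj A B π x₀ k ws +
              π k ws ⬝ᵥ R *ᵥ π k ws) + ∫⁻ w, g (w, ws) ∂ν := by
      intro ws
      set x := traj A B π x₀ k ws with hx
      set u := π k ws with hu
      obtain ⟨hi, he⟩ := step_expect hint1 hint2 hμ hSg A B P hPsym x u
      have hnn : 0 ≤ᵐ[ν] fun w => (Amat A w *ᵥ x + Bmat B w *ᵥ u) ⬝ᵥ P *ᵥ
          (Amat A w *ᵥ x + Bmat B w *ᵥ u) :=
        Filter.Eventually.of_forall fun w => quad_nonneg hP.posSemidef _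
      have hlint : ∫⁻ w, g (w, ws) ∂ν = ENNReal.ofReal (∫ w,
          (Amat A w *ᵥ x + Bmat B w *ᵥ u) ⬝ᵥ P *ᵥ (Amat A w *ᵥ x + Bmat B w *ᵥ u) ∂ν) :=
        (ofReal_integral_eq_lintegral_ofReal hi hnn).symm
      have hFnn : 0 ≤ x ⬝ᵥ Fm A (tildeSigma μ Sg) P *ᵥ x +
          2 * (u ⬝ᵥ Hm A B (tildeSigma μ Sg) P *ᵥ x) + u ⬝ᵥ Gm B (tildeSigma μ Sg) P *ᵥ u :=
        he ▸ integral_nonneg fun w => quad_nonneg hP.posSemidef _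
      rw [hlint, he, ← ENNReal.ofReal_add
        (add_nonneg (quad_nonneg hQ.posSemidef x) (quad_nonneg hR.posSemidef u)) hFnn]
      exact ENNReal.ofReal_le_ofReal
        (lower_bound_aux P Q (Fm A (tildeSigma μ Sg) P) R (Gm B (tildeSigma μ Sg) P)
          (Hm A B (tildeSigma μ Sg) P) hW hRic x u)
    calc val k ≤ ∫⁻ ws, (ENNReal.ofReal (traj A B π x₀ k ws ⬝ᵥ Q *ᵥ traj A B π x₀ k ws +
            π k ws ⬝ᵥ R *ᵥ π k ws) + ∫⁻ w, g (w, ws) ∂ν)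
          ∂(Measure.pi fun _ : Fin k => ν) := by
          rw [hval]; exact lintegral_mono key
      _ = cost k + val (k + 1) := by
          rw [lintegral_add_left (hcost_meas k), ← hval1, hcost]
  have hpartial : ∀ N, val 0 ≤ (∑ k ∈ Finset.range N, cost k) + val N := by
    intro N
    induction N with
    | zero => simp
    | succ N ih =>
      calc val 0 ≤ (∑ k ∈ Finset.range N, cost k) + val N := ih
        _ ≤ (∑ k ∈ Finset.range N, cost k) + (cost N + val (N + 1)) :=
            add_le_add_right (hstep N) _
        _ = (∑ k ∈ Finset.range (N + 1), cost k) + val (N + 1) := by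
            rw [Finset.sum_range_succ, add_assoc]
  have hval0 : val 0 = ENNReal.ofReal (x₀ ⬝ᵥ P *ᵥ x₀) := by
    rw [hval]
    simp [traj, lintegral_const]
  have hvalN : ∀ N, val N ≤ ENNReal.ofReal r * cost N := by
    intro N
    rw [hval, hcost, ← lintegral_const_mul _ (hcost_meas N)]
    refine lintegral_mono fun ws => ?_
    rw [← ENNReal.ofReal_mul hr0]
    refine ENNReal.ofReal_le_ofReal ?_
    refine (hrle _).trans ?_
    refine mul_le_mul_of_nonneg_left ?_ hr0
    exact le_add_of_nonneg_right (quad_nonneg hR.posSemidef _)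
  rcases eq_or_ne (∑' k, cost k) ⊤ with htop | htop
  · exact htop ▸ le_top
  · have h2 : Tendsto cost atTop (𝓝 0) := ENNReal.tendsto_atTop_zero_of_tsum_ne_top htop
    have h3 : Tendsto (fun N => (∑ k ∈ Finset.range N, cost k) + ENNReal.ofReal r * cost N)
        atTop (𝓝 (∑' k, cost k)) := by
      have hc : Tendsto (fun N => ENNReal.ofReal r * cost N) atTop
          (𝓝 (ENNReal.ofReal r * 0)) :=
        ENNReal.Tendsto.const_mul h2 (Or.inr ENNReal.ofReal_ne_top)
      have := (ENNReal.tendsto_nat_tsum cost).add hc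
      simpa using this
    refine ge_of_tendsto' h3 fun N => ?_
    calc ENNReal.ofReal (x₀ ⬝ᵥ P *ᵥ x₀) = val 0 := hval0.symm
      _ ≤ (∑ k ∈ Finset.range N, cost k) + val N := hpartial N
      _ ≤ (∑ k ∈ Finset.range N, cost k) + ENNReal.ofReal r * cost N :=
          add_le_add_right (hvalN N) _


end
end

section
/- Let ν be a probability measure on ℝⁿ with finite second moments, let Q ∈ ℝ^{d×d} and R ∈ ℝ^{m×m} be symmetric positive semidefinite, let K ∈ ℝ^{m×d}, and let P ∈ ℝ^{d×d} be symmetric positive definite such that Q + KᵀRK + ∫ (A(w)+B(w)K)ᵀ P (A(w)+B(w)K) dν(w) ⪯ P. Then for every x₀ ∈ ℝ^d the closed-loop cost series is summable and Σ_{k=0}^∞ tr((Q + KᵀRK) S_k(x₀)) ≤ x₀ᵀ P x₀, where S_k(x₀) are the closed-loop second-moment matrices. -/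
open MeasureTheory Matrix

noncomputable section

/-! ### Auxiliary lemmas -/

lemma conjT_eq_transpose {a b : Type*} (X : Matrix a b ℝ) : Xᴴ = Xᵀ := by
  ext i j; simp [conjTranspose_apply]

lemma trace_psd_nonneg {d : ℕ} {X : Matrix (Fin d) (Fin d) ℝ} (hX : X.PosSemidef) :
    0 ≤ X.trace := by
  refine Finset.sum_nonneg fun i _ => ?_
  have := hX.dotProduct_mulVec_nonneg (Pi.single i 1)
  simpa [mulVec_single, dotProduct_single] using this

lemma trace_mul_psd_nonneg {d : ℕ} {C S : Matrix (Fin d) (Fin d) ℝ} (hC : C.PosSemidef)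
    (hS : S.PosSemidef) : 0 ≤ (C * S).trace := by
  open scoped MatrixOrder in
  obtain ⟨Y, rfl⟩ := CStarAlgebra.nonneg_iff_eq_star_mul_self.mp hS.nonneg
  have h2 : (C * (star Y * Y)).trace = (Y * C * Yᴴ).trace := by
    rw [← Matrix.mul_assoc, Matrix.trace_mul_comm, ← Matrix.mul_assoc, star_eq_conjTranspose]
  rw [h2]; exact trace_psd_nonneg (hC.mul_mul_conjTranspose_same Y)

lemma posSemidef_vecMulVec_self {d : ℕ} (x : Fin d → ℝ) :
    (Matrix.vecMulVec x x).PosSemidef := by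
  refine Matrix.PosSemidef.of_dotProduct_mulVec_nonneg ?_ ?_
  · ext i j; simp [conjTranspose_apply, vecMulVec_apply, mul_comm]
  · intro u
    have h : (star u) ⬝ᵥ (Matrix.vecMulVec x x *ᵥ u) = (∑ i, x i * u i) * (∑ j, x j * u j) := by
      rw [Finset.sum_mul_sum]
      simp only [star_trivial, dotProduct, mulVec, vecMulVec_apply, Finset.mul_sum]
      rw [Finset.sum_comm]
      refine Finset.sum_congr rfl fun i _ => Finset.sum_congr rfl fun j _ => by ring
    rw [h]; exact mul_self_nonneg _

lemma trace_mul_vecMulVec {d : ℕ} (P : Matrix (Fin d) (Fin d) ℝ) (x : Fin d → ℝ) :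
    (P * Matrix.vecMulVec x x).trace = x ⬝ᵥ P *ᵥ x := by
  simp only [Matrix.trace, Matrix.diag, Matrix.mul_apply, vecMulVec_apply, dotProduct,
    Matrix.mulVec, Finset.mul_sum]
  refine Finset.sum_congr rfl fun i _ => Finset.sum_congr rfl fun j _ => by ring

lemma trace_cyc {d : ℕ} (P S N : Matrix (Fin d) (Fin d) ℝ) :
    (S * (Nᵀ * P * N)).trace = (P * (N * S * Nᵀ)).trace := by
  rw [Matrix.trace_mul_comm]
  simp only [← Matrix.mul_assoc]
  rw [Matrix.trace_mul_cycle, Matrix.trace_mul_cycle]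
  simp only [← Matrix.mul_assoc]
  rw [Matrix.trace_mul_cycle]
  simp only [Matrix.mul_assoc]

section withMeasure

variable {n d m : ℕ} (ν : Measure (Fin n → ℝ)) [IsProbabilityMeasure ν]

omit [IsProbabilityMeasure ν] in
lemma psd_integral (F : (Fin n → ℝ) → Matrix (Fin d) (Fin d) ℝ)
    (hint : ∀ i j, Integrable (fun w => F w i j) ν)
    (hpsd : ∀ w, (F w).PosSemidef) :
    (Matrix.of fun i j => ∫ w, F w i j ∂ν).PosSemidef := by
  refine Matrix.PosSemidef.of_dotProduct_mulVec_nonneg ?_ ?_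
  · ext i j
    simp only [conjTranspose_apply, Matrix.of_apply, star_trivial]
    exact congrArg (fun f => ∫ w, f w ∂ν) (funext fun w => by
      have := (hpsd w).1
      calc F w j i = (F w)ᴴ j i := by rw [this]
        _ = F w i j := by simp [conjTranspose_apply])
  · intro u
    have h : (star u) ⬝ᵥ ((Matrix.of fun i j => ∫ w, F w i j ∂ν) *ᵥ u)
        = ∫ w, (star u) ⬝ᵥ (F w *ᵥ u) ∂ν := by
      simp only [star_trivial, dotProduct, Matrix.mulVec, Matrix.of_apply, Finset.mul_sum]
      rw [integral_finset_sum _ (fun i _ => integrable_finset_sum _ fun j _ =>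
        ((hint i j).mul_const _).const_mul _)]
      refine Finset.sum_congr rfl fun i _ => ?_
      rw [integral_finset_sum _ (fun j _ => ((hint i j).mul_const _).const_mul _)]
      refine Finset.sum_congr rfl fun j _ => ?_
      have : (fun w => u i * (F w i j * u j)) = fun w => (u i * u j) * F w i j := by
        funext w; ring
      rw [this, integral_const_mul]; ring
    rw [h]
    exact integral_nonneg fun w => (hpsd w).dotProduct_mulVec_nonneg u

omit [IsProbabilityMeasure ν] in
lemma trace_integral (F : (Fin n → ℝ) → Matrix (Fin d) (Fin d) ℝ)
    (hint : ∀ i j, Integrable (fun w => F w i j) ν)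
    (C : Matrix (Fin d) (Fin d) ℝ) :
    (C * Matrix.of fun i j => ∫ w, F w i j ∂ν).trace = ∫ w, (C * F w).trace ∂ν := by
  have h : ∀ w, (C * F w).trace = ∑ i, ∑ j, C i j * F w j i := by
    intro w; simp [Matrix.trace, Matrix.diag, Matrix.mul_apply]
  simp_rw [h]
  rw [integral_finset_sum _ (f := fun i w => ∑ j, C i j * F w j i) (fun i _ => integrable_finset_sum _ fun j _ =>
    (hint j i).const_mul _)]
  simp only [Matrix.trace, Matrix.diag, Matrix.mul_apply, Matrix.of_apply]
  refine Finset.sum_congr rfl fun i _ => ?_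
  rw [integral_finset_sum _ (fun j _ => (hint j i).const_mul _)]
  refine Finset.sum_congr rfl fun j _ => ?_
  rw [integral_const_mul]

lemma integrable_affine_mul
    (hint1 : ∀ i, Integrable (fun w : Fin n → ℝ => w i) ν)
    (hint2 : ∀ i j, Integrable (fun w : Fin n → ℝ => w i * w j) ν)
    (a c : ℝ) (b e : Fin n → ℝ) :
    Integrable (fun w : Fin n → ℝ =>
      (a + ∑ l, w l * b l) * (c + ∑ l, w l * e l)) ν := by
  have heq : (fun w : Fin n → ℝ => (a + ∑ l, w l * b l) * (c + ∑ l, w l * e l))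
      = fun w => (a * c + ∑ l, (a * e l) * w l) + ((∑ l, (c * b l) * w l)
        + ∑ l : Fin n, ∑ j : Fin n, (b l * e j) * (w l * w j)) := by
    funext w
    have h1 : ∀ s t : ℝ, (a + s) * (c + t) = (a * c + a * t) + (s * c + s * t) := by
      intros; ring
    rw [h1]
    congr 1
    · congr 1
      rw [Finset.mul_sum]
      exact Finset.sum_congr rfl fun l _ => by ring
    · congr 1
      · rw [Finset.sum_mul]
        exact Finset.sum_congr rfl fun l _ => by ring
      · rw [Finset.sum_mul_sum]
        exact Finset.sum_congr rfl fun l _ => Finset.sum_congr rfl fun j _ => by ring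
  rw [heq]
  refine Integrable.add (Integrable.add (integrable_const _)
      (integrable_finset_sum _ fun l _ => (hint1 l).const_mul _))
    (Integrable.add (integrable_finset_sum _ fun l _ => (hint1 l).const_mul _)
      (integrable_finset_sum _ fun l _ => integrable_finset_sum _ fun j _ =>
        (hint2 l j).const_mul _))

omit [IsProbabilityMeasure ν] in
lemma closed_loop_apply (A : Fin (n + 1) → Matrix (Fin d) (Fin d) ℝ)
    (B : Fin (n + 1) → Matrix (Fin d) (Fin m) ℝ) (K : Matrix (Fin m) (Fin d) ℝ)
    (w : Fin n → ℝ) (i j : Fin d) :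
    (Amat A w + Bmat B w * K) i j
      = (A 0 + B 0 * K) i j + ∑ l, w l * (A l.succ + B l.succ * K) i j := by
  simp only [Amat, Bmat, Matrix.add_mul, Matrix.sum_mul, Matrix.smul_mul,
    Matrix.add_apply, Matrix.sum_apply, Matrix.smul_apply, smul_eq_mul, mul_add,
    Finset.sum_add_distrib]
  ring

lemma integrable_entry_mul
    (hint1 : ∀ i, Integrable (fun w : Fin n → ℝ => w i) ν)
    (hint2 : ∀ i j, Integrable (fun w : Fin n → ℝ => w i * w j) ν)
    (A : Fin (n + 1) → Matrix (Fin d) (Fin d) ℝ)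
    (B : Fin (n + 1) → Matrix (Fin d) (Fin m) ℝ) (K : Matrix (Fin m) (Fin d) ℝ)
    (i a j b : Fin d) :
    Integrable (fun w : Fin n → ℝ =>
      (Amat A w + Bmat B w * K) i a * (Amat A w + Bmat B w * K) j b) ν := by
  have h := integrable_affine_mul ν hint1 hint2 ((A 0 + B 0 * K) i a) ((A 0 + B 0 * K) j b)
    (fun l => (A l.succ + B l.succ * K) i a) (fun l => (A l.succ + B l.succ * K) j b)
  refine h.congr (Filter.Eventually.of_forall fun w => ?_)
  simp only [closed_loop_apply]

lemma integrable_MSMt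
    (hint1 : ∀ i, Integrable (fun w : Fin n → ℝ => w i) ν)
    (hint2 : ∀ i j, Integrable (fun w : Fin n → ℝ => w i * w j) ν)
    (A : Fin (n + 1) → Matrix (Fin d) (Fin d) ℝ)
    (B : Fin (n + 1) → Matrix (Fin d) (Fin m) ℝ) (K : Matrix (Fin m) (Fin d) ℝ)
    (S : Matrix (Fin d) (Fin d) ℝ) (i j : Fin d) :
    Integrable (fun w : Fin n → ℝ =>
      ((Amat A w + Bmat B w * K) * S * (Amat A w + Bmat B w * K)ᵀ) i j) ν := by
  have heq : (fun w : Fin n → ℝ =>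
      ((Amat A w + Bmat B w * K) * S * (Amat A w + Bmat B w * K)ᵀ) i j)
      = fun w => ∑ b : Fin d, ∑ a : Fin d, S a b *
          ((Amat A w + Bmat B w * K) i a * (Amat A w + Bmat B w * K) j b) := by
    funext w
    simp only [Matrix.mul_apply, Matrix.transpose_apply, Finset.sum_mul]
    exact Finset.sum_congr rfl fun b _ => Finset.sum_congr rfl fun a _ => by ring
  rw [heq]
  exact integrable_finset_sum _ fun b _ => integrable_finset_sum _ fun a _ =>
    (integrable_entry_mul ν hint1 hint2 A B K i a j b).const_mul _

lemma integrable_MtPM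
    (hint1 : ∀ i, Integrable (fun w : Fin n → ℝ => w i) ν)
    (hint2 : ∀ i j, Integrable (fun w : Fin n → ℝ => w i * w j) ν)
    (A : Fin (n + 1) → Matrix (Fin d) (Fin d) ℝ)
    (B : Fin (n + 1) → Matrix (Fin d) (Fin m) ℝ) (K : Matrix (Fin m) (Fin d) ℝ)
    (P : Matrix (Fin d) (Fin d) ℝ) (i j : Fin d) :
    Integrable (fun w : Fin n → ℝ =>
      ((Amat A w + Bmat B w * K)ᵀ * P * (Amat A w + Bmat B w * K)) i j) ν := by
  have heq : (fun w : Fin n → ℝ =>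
      ((Amat A w + Bmat B w * K)ᵀ * P * (Amat A w + Bmat B w * K)) i j)
      = fun w => ∑ b : Fin d, ∑ a : Fin d, P a b *
          ((Amat A w + Bmat B w * K) a i * (Amat A w + Bmat B w * K) b j) := by
    funext w
    simp only [Matrix.mul_apply, Matrix.transpose_apply, Finset.sum_mul]
    exact Finset.sum_congr rfl fun b _ => Finset.sum_congr rfl fun a _ => by ring
  rw [heq]
  exact integrable_finset_sum _ fun b _ => integrable_finset_sum _ fun a _ =>
    (integrable_entry_mul ν hint1 hint2 A B K a i b j).const_mul _

end withMeasure

/-- If `P ≻ 0` satisfies the Lyapunov-type inequality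
`Q + KᵀRK + ∫ (A(w)+B(w)K)ᵀ P (A(w)+B(w)K) dν ⪯ P`, then the closed-loop cost series is
summable and `Σ_k tr((Q + KᵀRK) S_k(x₀)) ≤ x₀ᵀPx₀`. -/
theorem stmt15 {n d m : ℕ}
    (A : Fin (n + 1) → Matrix (Fin d) (Fin d) ℝ)
    (B : Fin (n + 1) → Matrix (Fin d) (Fin m) ℝ)
    (ν : Measure (Fin n → ℝ)) [IsProbabilityMeasure ν]
    (hint1 : ∀ i, Integrable (fun w : Fin n → ℝ => w i) ν)
    (hint2 : ∀ i j, Integrable (fun w : Fin n → ℝ => w i * w j) ν)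
    (Q : Matrix (Fin d) (Fin d) ℝ) (hQ : Q.PosSemidef)
    (R : Matrix (Fin m) (Fin m) ℝ) (hR : R.PosSemidef)
    (K : Matrix (Fin m) (Fin d) ℝ)
    (P : Matrix (Fin d) (Fin d) ℝ) (hP : P.PosDef)
    (hLyap : (P - (Q + Kᵀ * R * K + Matrix.of fun i j =>
      ∫ w, ((Amat A w + Bmat B w * K)ᵀ * P * (Amat A w + Bmat B w * K)) i j
        ∂ν)).PosSemidef)
    (x₀ : Fin d → ℝ) :
    Summable (fun k => ((Q + Kᵀ * R * K) *
        Sseq ν (fun w => Amat A w + Bmat B w * K) x₀ k).trace) ∧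
      (∑' k, ((Q + Kᵀ * R * K) *
        Sseq ν (fun w => Amat A w + Bmat B w * K) x₀ k).trace) ≤
        x₀ ⬝ᵥ P *ᵥ x₀ := by
  set C := Q + Kᵀ * R * K with hCdef
  set G := (Matrix.of fun i j =>
      ∫ w, ((Amat A w + Bmat B w * K)ᵀ * P * (Amat A w + Bmat B w * K)) i j ∂ν :
      Matrix (Fin d) (Fin d) ℝ) with hGdef
  set S := Sseq ν (fun w => Amat A w + Bmat B w * K) x₀ with hSdef
  have hC : C.PosSemidef := by
    have h := hR.conjTranspose_mul_mul_same K
    rw [conjT_eq_transpose] at h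
    exact hQ.add h
  have hintS : ∀ (X : Matrix (Fin d) (Fin d) ℝ) (i j : Fin d),
      Integrable (fun w : Fin n → ℝ =>
        ((Amat A w + Bmat B w * K) * X * (Amat A w + Bmat B w * K)ᵀ) i j) ν :=
    fun X i j => integrable_MSMt ν hint1 hint2 A B K X i j
  have hintG : ∀ (i j : Fin d), Integrable (fun w : Fin n → ℝ =>
      ((Amat A w + Bmat B w * K)ᵀ * P * (Amat A w + Bmat B w * K)) i j) ν :=
    fun i j => integrable_MtPM ν hint1 hint2 A B K P i j
  have hSsucc : ∀ k, S (k + 1) = Matrix.of (fun i j =>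
      ∫ w, ((Amat A w + Bmat B w * K) * S k * (Amat A w + Bmat B w * K)ᵀ) i j ∂ν) :=
    fun k => rfl
  have hS0 : S 0 = Matrix.vecMulVec x₀ x₀ := rfl
  have hpsd : ∀ k, (S k).PosSemidef := by
    intro k
    induction k with
    | zero => rw [hS0]; exact posSemidef_vecMulVec_self x₀
    | succ k ih =>
      rw [hSsucc k]
      refine psd_integral ν _ (fun i j => hintS (S k) i j) (fun w => ?_)
      have h := ih.mul_mul_conjTranspose_same (Amat A w + Bmat B w * K)
      rwa [conjT_eq_transpose] at h
  have htr : ∀ k, (P * S (k + 1)).trace = (G * S k).trace := by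
    intro k
    rw [hSsucc k, trace_integral ν _ (fun i j => hintS (S k) i j) P, hGdef,
      Matrix.trace_mul_comm, trace_integral ν _ (fun i j => hintG i j) (S k)]
    congr 1
    funext w
    exact (trace_cyc P (S k) (Amat A w + Bmat B w * K)).symm
  have hstep : ∀ k, (C * S k).trace + (P * S (k + 1)).trace ≤ (P * S k).trace := by
    intro k
    have h0 := trace_mul_psd_nonneg hLyap (hpsd k)
    have hexp : ((P - (C + G)) * S k).trace
        = (P * S k).trace - (C * S k).trace - (G * S k).trace := by
      simp only [Matrix.sub_mul, Matrix.add_mul, Matrix.trace_sub, Matrix.trace_add]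
      ring
    rw [hexp] at h0
    rw [htr k]
    linarith
  have hf0 : ∀ k, 0 ≤ (C * S k).trace := fun k => trace_mul_psd_nonneg hC (hpsd k)
  have hP0 : ∀ k, 0 ≤ (P * S k).trace :=
    fun k => trace_mul_psd_nonneg hP.posSemidef (hpsd k)
  have hPS0 : (P * S 0).trace = x₀ ⬝ᵥ P *ᵥ x₀ := by
    rw [hS0]; exact trace_mul_vecMulVec P x₀
  have hpartial : ∀ N, (∑ k ∈ Finset.range N, (C * S k).trace) + (P * S N).trace
      ≤ (P * S 0).trace := by
    intro N
    induction N with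
    | zero => simp
    | succ N ih =>
      rw [Finset.sum_range_succ]
      have := hstep N
      linarith
  have hbound : ∀ N, ∑ k ∈ Finset.range N, (C * S k).trace ≤ x₀ ⬝ᵥ P *ᵥ x₀ := by
    intro N
    have h := hpartial N
    rw [hPS0] at h
    have := hP0 N
    linarith
  exact ⟨summable_of_sum_range_le hf0 hbound, Real.tsum_le_of_sum_range_le hf0 hbound⟩

end
end

section
/- Let L ∈ ℝ^{p×p} and S ∈ ℝ^{m×m} be symmetric positive definite, H₁, …, Hₙ ∈ ℝ^{p×m}, and ρ ≥ 0, and suppose ρ² Σ_{i=1}^n Hᵢᵀ L⁻¹ Hᵢ ⪯ S. Then for every ζ ∈ ℝⁿ with ‖ζ‖₂ ≤ ρ and all vectors a ∈ ℝ^p, b ∈ ℝ^m, one has Σ_{i=1}^n ζᵢ · aᵀ Hᵢ b ≤ √(aᵀ L a) · √(bᵀ S b). -/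
open Matrix

lemma mulVec_dot_eq {k l : ℕ} (A : Matrix (Fin k) (Fin l) ℝ) (x : Fin l → ℝ) (y : Fin k → ℝ) :
    (A *ᵥ x) ⬝ᵥ y = x ⬝ᵥ (Aᵀ *ᵥ y) := by
  rw [← vecMul_transpose, dotProduct_mulVec]

open scoped MatrixOrder in
lemma psd_cauchy_schwarz {k : ℕ} (M : Matrix (Fin k) (Fin k) ℝ) (hM : M.PosSemidef)
    (x y : Fin k → ℝ) :
    (x ⬝ᵥ M *ᵥ y) ^ 2 ≤ (x ⬝ᵥ M *ᵥ x) * (y ⬝ᵥ M *ᵥ y) := by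
  set R := CFC.sqrt M with hR
  have hRsym : Rᵀ = R := by
    have h := (CFC.sqrt_nonneg M).posSemidef.1.eq
    rwa [Matrix.conjTranspose_eq_transpose_of_trivial] at h
  have key : ∀ u v : Fin k → ℝ, u ⬝ᵥ M *ᵥ v = (R *ᵥ u) ⬝ᵥ (R *ᵥ v) := by
    intro u v
    rw [← CFC.sqrt_mul_sqrt_self M hM.nonneg, ← hR, ← mulVec_mulVec, mulVec_dot_eq, hRsym,
      dotProduct_comm]
  rw [key x y, key x x, key y y]
  simpa [dotProduct, pow_two] using
    Finset.sum_mul_sq_le_sq_mul_sq Finset.univ (fun i => (R *ᵥ x) i) (fun i => (R *ᵥ y) i)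

/-- If `ρ² Σᵢ Hᵢᵀ L⁻¹ Hᵢ ⪯ S` with `L, S` symmetric positive definite and
`ρ ≥ 0`, then for every `ζ` with `‖ζ‖₂ ≤ ρ` and all vectors `a, b`,
`Σᵢ ζᵢ · aᵀHᵢb ≤ √(aᵀLa) · √(bᵀSb)`. -/
theorem stmt17 {p m n : ℕ}
    (L : Matrix (Fin p) (Fin p) ℝ) (hL : L.PosDef)
    (S : Matrix (Fin m) (Fin m) ℝ) (hS : S.PosDef)
    (H : Fin n → Matrix (Fin p) (Fin m) ℝ) (ρ : ℝ) (hρ : 0 ≤ ρ)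
    (hmaj : (S - ρ ^ 2 • ∑ i : Fin n, (H i)ᵀ * L⁻¹ * H i).PosSemidef)
    (ζ : Fin n → ℝ) (hζ : Real.sqrt (∑ i, ζ i ^ 2) ≤ ρ)
    (a : Fin p → ℝ) (b : Fin m → ℝ) :
    ∑ i, ζ i * (a ⬝ᵥ (H i) *ᵥ b) ≤
      Real.sqrt (a ⬝ᵥ L *ᵥ a) * Real.sqrt (b ⬝ᵥ S *ᵥ b) := by
  have hLinv : L⁻¹.PosDef := hL.inv
  have hLa : 0 ≤ a ⬝ᵥ L *ᵥ a := hL.posSemidef.re_dotProduct_nonneg a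
  have hLsym : Lᵀ = L := by
    have h := hL.1.eq
    rwa [Matrix.conjTranspose_eq_transpose_of_trivial] at h
  have hdet : IsUnit L.det := isUnit_iff_ne_zero.mpr hL.det_pos.ne'
  set c : Fin n → ℝ := fun i => a ⬝ᵥ (H i) *ᵥ b with hc
  -- step 2 : c i ^ 2 ≤ (aᵀ L a) * (bᵀ Hᵢᵀ L⁻¹ Hᵢ b)
  have hstep2 : ∀ i, c i ^ 2 ≤ (a ⬝ᵥ L *ᵥ a) * (b ⬝ᵥ ((H i)ᵀ * L⁻¹ * H i) *ᵥ b) := by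
    intro i
    have h1 : (L *ᵥ a) ⬝ᵥ L⁻¹ *ᵥ ((H i) *ᵥ b) = c i := by
      rw [mulVec_dot_eq, hLsym, mulVec_mulVec, mulVec_mulVec,
        Matrix.mul_nonsing_inv _ hdet, Matrix.one_mul]
    have h2 : (L *ᵥ a) ⬝ᵥ L⁻¹ *ᵥ (L *ᵥ a) = a ⬝ᵥ L *ᵥ a := by
      rw [mulVec_dot_eq, hLsym, mulVec_mulVec, mulVec_mulVec,
        Matrix.mul_nonsing_inv _ hdet, Matrix.one_mul]
    have h3 : ((H i) *ᵥ b) ⬝ᵥ L⁻¹ *ᵥ ((H i) *ᵥ b) = b ⬝ᵥ ((H i)ᵀ * L⁻¹ * H i) *ᵥ b := by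
      rw [mulVec_dot_eq, mulVec_mulVec, mulVec_mulVec, Matrix.mul_assoc]
    have := psd_cauchy_schwarz L⁻¹ hLinv.posSemidef (L *ᵥ a) ((H i) *ᵥ b)
    rwa [h1, h2, h3] at this
  -- step 3 : ρ² Σ cᵢ² ≤ (aᵀLa)(bᵀSb)
  have hmajb : ρ ^ 2 * (b ⬝ᵥ (∑ i : Fin n, (H i)ᵀ * L⁻¹ * H i) *ᵥ b) ≤ b ⬝ᵥ S *ᵥ b := by
    have := hmaj.re_dotProduct_nonneg b
    simp only [RCLike.re_to_real, Matrix.sub_mulVec, dotProduct_sub, smul_mulVec,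
      dotProduct_smul, smul_eq_mul, star_trivial] at this
    linarith
  have hsum : b ⬝ᵥ (∑ i : Fin n, (H i)ᵀ * L⁻¹ * H i) *ᵥ b
      = ∑ i : Fin n, b ⬝ᵥ ((H i)ᵀ * L⁻¹ * H i) *ᵥ b := by
    have h4 : (∑ i : Fin n, (H i)ᵀ * L⁻¹ * H i) *ᵥ b
        = ∑ i : Fin n, ((H i)ᵀ * L⁻¹ * H i) *ᵥ b :=
      map_sum (Matrix.mulVec.addMonoidHomLeft b) _ Finset.univ
    rw [h4]
    simp only [dotProduct, Finset.sum_apply, Finset.mul_sum]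
    exact Finset.sum_comm
  have hstep3 : ρ ^ 2 * ∑ i, c i ^ 2 ≤ (a ⬝ᵥ L *ᵥ a) * (b ⬝ᵥ S *ᵥ b) := by
    calc ρ ^ 2 * ∑ i, c i ^ 2
        ≤ ρ ^ 2 * ∑ i, (a ⬝ᵥ L *ᵥ a) * (b ⬝ᵥ ((H i)ᵀ * L⁻¹ * H i) *ᵥ b) := by
          apply mul_le_mul_of_nonneg_left (Finset.sum_le_sum fun i _ => hstep2 i) (sq_nonneg ρ)
      _ = (a ⬝ᵥ L *ᵥ a) * (ρ ^ 2 * ∑ i, b ⬝ᵥ ((H i)ᵀ * L⁻¹ * H i) *ᵥ b) := by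
          rw [← Finset.mul_sum]; ring
      _ = (a ⬝ᵥ L *ᵥ a) * (ρ ^ 2 * (b ⬝ᵥ (∑ i : Fin n, (H i)ᵀ * L⁻¹ * H i) *ᵥ b)) := by
          rw [hsum]
      _ ≤ (a ⬝ᵥ L *ᵥ a) * (b ⬝ᵥ S *ᵥ b) := mul_le_mul_of_nonneg_left hmajb hLa
  -- step 1 : Cauchy-Schwarz on ζ and c
  have hcs : (∑ i, ζ i * c i) ^ 2 ≤ (∑ i, ζ i ^ 2) * ∑ i, c i ^ 2 :=
    Finset.sum_mul_sq_le_sq_mul_sq Finset.univ ζ c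
  have hζ2 : ∑ i, ζ i ^ 2 ≤ ρ ^ 2 := by
    have h0 : 0 ≤ ∑ i, ζ i ^ 2 := Finset.sum_nonneg fun i _ => sq_nonneg _
    nlinarith [Real.sq_sqrt h0, Real.sqrt_nonneg (∑ i, ζ i ^ 2)]
  have hcsum : 0 ≤ ∑ i, c i ^ 2 := Finset.sum_nonneg fun i _ => sq_nonneg _
  have hfinal : (∑ i, ζ i * c i) ^ 2 ≤ (a ⬝ᵥ L *ᵥ a) * (b ⬝ᵥ S *ᵥ b) := by
    calc (∑ i, ζ i * c i) ^ 2 ≤ (∑ i, ζ i ^ 2) * ∑ i, c i ^ 2 := hcs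
      _ ≤ ρ ^ 2 * ∑ i, c i ^ 2 := mul_le_mul_of_nonneg_right hζ2 hcsum
      _ ≤ (a ⬝ᵥ L *ᵥ a) * (b ⬝ᵥ S *ᵥ b) := hstep3
  calc ∑ i, ζ i * c i ≤ Real.sqrt ((∑ i, ζ i * c i) ^ 2) := by
        rw [Real.sqrt_sq_eq_abs]; exact le_abs_self _
    _ ≤ Real.sqrt ((a ⬝ᵥ L *ᵥ a) * (b ⬝ᵥ S *ᵥ b)) := Real.sqrt_le_sqrt hfinal
    _ = Real.sqrt (a ⬝ᵥ L *ᵥ a) * Real.sqrt (b ⬝ᵥ S *ᵥ b) := Real.sqrt_mul hLa _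
end
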